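/- Let X be a Zariski-closed subset of the space of ℕ×ℕ matrices over k that is stable under Sym (acting by row permutations) and under GL (acting by right multiplication on columns). Suppose there exist n ≥ 1 and a nonzero polynomial f ∈ MvPolynomial (Fin n × Fin n) k such that for every A ∈ X, f evaluates to 0 at the top-left n×n block of A (the function (i, j) ↦ A i j for i, j ∈ Fin n). Then every matrix in X has rank at most n − 1: for every A ∈ X, every n×n submatrix of A is singular. -/

import Mathlib

noncomputable section

/-- `g : ℕ → ℕ → k` is a finitary invertible `ℕ×ℕ` matrix. -/
def IsFinGL {k : Type*} [Field k] (g : ℕ → ℕ → k) : Prop :=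
  ∃ N : ℕ, (∀ i j : ℕ, N ≤ i ∨ N ≤ j → g i j = if i = j then 1 else 0) ∧
    IsUnit (Matrix.of fun i j : Fin N => g i.1 j.1)

/-- A permutation of `ℕ` with finite support. -/
def IsFinPerm (σ : Equiv.Perm ℕ) : Prop := ∃ N : ℕ, ∀ i : ℕ, N ≤ i → σ i = i

/-- The action of `Sym` on `ℕ×ℕ` matrices by permuting rows. -/
def rowPerm {k : Type*} [Field k] (σ : Equiv.Perm ℕ) (A : ℕ → ℕ → k) : ℕ → ℕ → k :=
  fun i j => A (σ⁻¹ i) j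

/-- The action of `GL` on `ℕ×ℕ` matrices by right multiplication on columns:
`(A • g) i j = Σ_t A i t * g t j`, a finite sum since `g` is finitary. -/
def colMul {k : Type*} [Field k] (A : ℕ → ℕ → k) (g : ℕ → ℕ → k) : ℕ → ℕ → k :=
  fun i j => ∑ᶠ t : ℕ, A i t * g t j

/-- A subset of the space of `ℕ×ℕ` matrices is Zariski closed if it is the
common zero locus of a set of polynomials in the entries. -/
def IsZClosedMat {k : Type*} [Field k] (X : Set (ℕ → ℕ → k)) : Prop :=
  ∃ S : Set (MvPolynomial (ℕ × ℕ) k),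
    X = {A | ∀ f ∈ S, MvPolynomial.eval (fun p : ℕ × ℕ => A p.1 p.2) f = 0}

/-- Any injection `Fin n → ℕ` is inverted by a finite-support permutation of `ℕ`. -/
lemma exists_finperm_map {n : ℕ} (r : Fin n → ℕ) (hr : Function.Injective r) :
    ∃ σ : Equiv.Perm ℕ, IsFinPerm σ ∧ ∀ i : Fin n, σ (r i) = (i : ℕ) := by
  classical
  set N : ℕ := n ⊔ (Finset.univ.sup fun i => r i + 1) with hNdef
  have hnN : n ≤ N := le_sup_left
  have hrN : ∀ i : Fin n, r i < N := fun i =>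
    lt_of_lt_of_le (Nat.lt_succ_self _)
      ((Finset.le_sup (f := fun i => r i + 1) (Finset.mem_univ i)).trans le_sup_right)
  set rN : Fin n → Fin N := fun i => ⟨r i, hrN i⟩ with hrNdef
  set incl : Fin n → Fin N := fun i => ⟨i, lt_of_lt_of_le i.2 hnN⟩ with hincldef
  have hrN_inj : Function.Injective rN := fun a b hab => hr (by
    have := congrArg Fin.val hab; simpa [hrNdef] using this)
  have hincl_inj : Function.Injective incl := fun a b hab => Fin.ext (by
    have := congrArg Fin.val hab; simpa [hincldef] using this)
  set e : {x : Fin N // x ∈ Set.range rN} ≃ {x : Fin N // x ∈ Set.range incl} :=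
    (Equiv.ofInjective rN hrN_inj).symm.trans (Equiv.ofInjective incl hincl_inj) with hedef
  have hπ : ∀ i : Fin n, e.extendSubtype (rN i) = incl i := by
    intro i
    rw [Equiv.extendSubtype_apply_of_mem e (rN i) ⟨i, rfl⟩]
    have h1 : (Equiv.ofInjective rN hrN_inj).symm ⟨rN i, ⟨i, rfl⟩⟩ = i := by
      rw [Equiv.symm_apply_eq, Equiv.ofInjective_apply]
    show ((Equiv.ofInjective incl hincl_inj)
      ((Equiv.ofInjective rN hrN_inj).symm ⟨rN i, ⟨i, rfl⟩⟩) : Fin N) = incl i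
    rw [h1, Equiv.ofInjective_apply]
  refine ⟨(e.extendSubtype).extendDomain (Fin.equivSubtype), ⟨N, fun x hx => ?_⟩, fun i => ?_⟩
  · exact Equiv.Perm.extendDomain_apply_not_subtype _ _ (not_lt.2 hx)
  · have h3 := Equiv.Perm.extendDomain_apply_image e.extendSubtype Fin.equivSubtype (rN i)
    rw [hπ i] at h3
    exact h3

/-- If a `Sym × GL`-stable Zariski-closed set `X` of `ℕ×ℕ` matrices admits a
nonzero polynomial `f` in the entries of the top-left `n×n` block vanishing on
all of `X`, then every matrix in `X` has rank at most `n - 1`, i.e. all of its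
`n×n` submatrices are singular. -/
theorem rank_bound_of_equation_on_symGL_stable_closed_set
    {k : Type*} [Field k] [IsAlgClosed k] [CharZero k]
    (X : Set (ℕ → ℕ → k)) (hXcl : IsZClosedMat X)
    (hSym : ∀ σ : Equiv.Perm ℕ, IsFinPerm σ → ∀ A ∈ X, rowPerm σ A ∈ X)
    (hGL : ∀ g : ℕ → ℕ → k, IsFinGL g → ∀ A ∈ X, colMul A g ∈ X)
    (n : ℕ) (hn : 1 ≤ n)
    (f : MvPolynomial (Fin n × Fin n) k) (hf : f ≠ 0)
    (hvan : ∀ A ∈ X,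
      MvPolynomial.eval (fun p : Fin n × Fin n => A p.1.1 p.2.1) f = 0) :
    ∀ A ∈ X, ∀ r cc : Fin n → ℕ, Function.Injective r → Function.Injective cc →
      (Matrix.of fun i j : Fin n => A (r i) (cc j)).det = 0 := by
  classical
  intro A hA r cc hr hcc
  by_contra hdet
  set C : Matrix (Fin n) (Fin n) k := Matrix.of fun i j => A (r i) (cc j) with hCdef
  have hCdet : IsUnit C.det := isUnit_iff_ne_zero.mpr hdet
  obtain ⟨σ, hσfin, hσ⟩ := exists_finperm_map r hr
  obtain ⟨ρ, hρfin, hρ⟩ := exists_finperm_map cc hcc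
  obtain ⟨N₂, hN₂⟩ := hρfin
  have hτfix : ∀ x : ℕ, N₂ ≤ x → ρ⁻¹ x = x := fun x hx =>
    (Equiv.Perm.inv_eq_iff_eq).2 (hN₂ x hx).symm
  have hτ : ∀ j : Fin n, ρ⁻¹ (j : ℕ) = cc j := fun j =>
    (Equiv.Perm.inv_eq_iff_eq).2 (hρ j).symm
  have hτlt : ∀ x : ℕ, x < N₂ → ρ⁻¹ x < N₂ := by
    intro x hx
    by_contra h
    have h2 := hN₂ _ (not_lt.1 h)
    rw [← Equiv.Perm.mul_apply, mul_inv_cancel, Equiv.Perm.one_apply] at h2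
    rw [← h2] at h
    exact h (by omega)
  have hρlt : ∀ x : ℕ, x < N₂ → ρ x < N₂ := by
    intro x hx
    by_contra h
    have h2 := hN₂ _ (not_lt.1 h)
    have h3 : ρ x = x := ρ.injective h2
    omega
  -- row permutation
  set A1 : ℕ → ℕ → k := rowPerm σ A with hA1def
  have hA1mem : A1 ∈ X := hSym σ hσfin A hA
  have hA1 : ∀ (i : Fin n) (j : ℕ), A1 (i : ℕ) j = A (r i) j := by
    intro i j
    show A (σ⁻¹ (i : ℕ)) j = A (r i) j
    congr 1
    exact (Equiv.Perm.inv_eq_iff_eq).2 (hσ i).symm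
  -- column permutation
  set g1 : ℕ → ℕ → k := fun t j => if t = ρ⁻¹ j then 1 else 0 with hg1def
  have hg1fin : IsFinGL g1 := by
    refine ⟨N₂, fun i j hij => ?_, ?_⟩
    · rcases hij with hi | hj
      · by_cases hj : N₂ ≤ j
        · rw [hg1def]; dsimp only; rw [hτfix j hj]
        · have h1 : ρ⁻¹ j < N₂ := hτlt j (not_le.1 hj)
          rw [hg1def]; dsimp only
          rw [if_neg (by omega), if_neg (by omega)]
      · rw [hg1def]; dsimp only; rw [hτfix j hj]
    · have hPQ : (Matrix.of fun i j : Fin N₂ => g1 i.1 j.1) *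
          (Matrix.of fun i j : Fin N₂ => if (i : ℕ) = ρ j.1 then (1 : k) else 0) = 1 := by
        ext i j
        rw [Matrix.mul_apply, Matrix.one_apply]
        rw [Finset.sum_eq_single (⟨ρ j.1, hρlt _ j.2⟩ : Fin N₂)]
        · simp [hg1def, Equiv.symm_apply_apply, Fin.ext_iff]
        · intro t _ ht
          have h4 : (t : ℕ) ≠ ρ j.1 := fun h => ht (Fin.ext h)
          simp [h4]
        · simp
      exact (Matrix.isUnit_iff_isUnit_det _).mpr (Matrix.isUnit_det_of_right_inverse hPQ)
  have hcol1 : ∀ (A' : ℕ → ℕ → k) (i j : ℕ), colMul A' g1 i j = A' i (ρ⁻¹ j) := by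
    intro A' i j
    have := finsum_eq_single (fun t => A' i t * g1 t j) (ρ⁻¹ j)
      (fun x hx => by simp only [hg1def]; rw [if_neg hx, mul_zero])
    rw [colMul, this, hg1def]
    simp
  set A2 : ℕ → ℕ → k := colMul A1 g1 with hA2def
  have hA2mem : A2 ∈ X := hGL g1 hg1fin A1 hA1mem
  have hA2 : ∀ i t : Fin n, A2 (i : ℕ) (t : ℕ) = C i t := by
    intro i t
    rw [hA2def, hcol1, hτ, hA1]
    rfl
  -- the key claim: f vanishes at every invertible matrix
  have key : ∀ B : Matrix (Fin n) (Fin n) k, IsUnit B.det →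
      MvPolynomial.eval (fun p : Fin n × Fin n => B p.1 p.2) f = 0 := by
    intro B hB
    set M : Matrix (Fin n) (Fin n) k := C⁻¹ * B with hMdef
    have hMdet : IsUnit M.det := by
      rw [hMdef, Matrix.det_mul]
      exact (Matrix.isUnit_nonsing_inv_det C hCdet).mul hB
    set g2 : ℕ → ℕ → k := fun t j =>
      if h : t < n ∧ j < n then M ⟨t, h.1⟩ ⟨j, h.2⟩ else if t = j then 1 else 0 with hg2def
    have hg2fin : IsFinGL g2 := by
      refine ⟨n, fun i j hij => ?_, ?_⟩
      · rw [hg2def]; dsimp only; rw [dif_neg (by omega)]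
      · have hblk : (Matrix.of fun i j : Fin n => g2 i.1 j.1) = M := by
          ext i j
          show g2 i.1 j.1 = M i j
          rw [hg2def]; dsimp only; rw [dif_pos ⟨i.2, j.2⟩]
        rw [hblk]
        exact (Matrix.isUnit_iff_isUnit_det _).mpr hMdet
    set A3 : ℕ → ℕ → k := colMul A2 g2 with hA3def
    have hA3mem : A3 ∈ X := hGL g2 hg2fin A2 hA2mem
    have hA3 : ∀ i j : Fin n, A3 (i : ℕ) (j : ℕ) = B i j := by
      intro i j
      have hsupp : Function.support (fun t => A2 (i : ℕ) t * g2 t (j : ℕ)) ⊆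
          ↑(Finset.range n) := by
        intro t ht
        simp only [Finset.coe_range, Set.mem_Iio]
        by_contra h
        apply ht
        have hz : g2 t (j : ℕ) = 0 := by
          rw [hg2def]; dsimp only
          rw [dif_neg (by omega), if_neg (by omega)]
        show A2 (i : ℕ) t * g2 t (j : ℕ) = 0
        rw [hz, mul_zero]
      rw [hA3def]
      show ∑ᶠ t, A2 (i : ℕ) t * g2 t (j : ℕ) = B i j
      rw [finsum_eq_finset_sum_of_support_subset _ hsupp, Finset.sum_range]
      have hterm : ∀ t : Fin n, A2 (i : ℕ) (t : ℕ) * g2 (t : ℕ) (j : ℕ) = C i t * M t j := by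
        intro t
        rw [hA2 i t]
        congr 1
        rw [hg2def]; dsimp only; rw [dif_pos ⟨t.2, j.2⟩]
      rw [Finset.sum_congr rfl fun t _ => hterm t]
      rw [← Matrix.mul_apply, hMdef, Matrix.mul_nonsing_inv_cancel_left C B hCdet]
    have h0 := hvan A3 hA3mem
    have heq : (fun p : Fin n × Fin n => A3 p.1.1 p.2.1) = fun p => B p.1 p.2 :=
      funext fun p => hA3 p.1 p.2
    rw [heq] at h0
    exact h0
  -- polynomial argument: f times the generic determinant vanishes everywhere
  set D : MvPolynomial (Fin n × Fin n) k :=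
    (Matrix.of fun i j : Fin n => MvPolynomial.X (i, j)).det with hDdef
  have hDeval : ∀ x : Fin n × Fin n → k,
      MvPolynomial.eval x D = (Matrix.of fun i j : Fin n => x (i, j)).det := by
    intro x
    rw [hDdef, RingHom.map_det]
    congr 1
    ext i j
    simp [Matrix.map_apply]
  have hD0 : D ≠ 0 := by
    intro h
    have h1 := hDeval (fun p => if p.1 = p.2 then 1 else 0)
    have h2 : (Matrix.of fun i j : Fin n => if i = j then (1 : k) else 0) = 1 := by
      ext i j
      simp [Matrix.one_apply]
    rw [h, map_zero, h2, Matrix.det_one] at h1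
    exact one_ne_zero h1.symm
  have hfD : f * D = 0 := by
    apply MvPolynomial.funext
    intro x
    rw [map_mul, map_zero]
    by_cases hx : IsUnit (Matrix.of fun i j : Fin n => x (i, j)).det
    · have hk := key _ hx
      have hxx : (fun p : Fin n × Fin n =>
          (Matrix.of fun i j : Fin n => x (i, j)) p.1 p.2) = x := funext fun p => rfl
      rw [hxx] at hk
      rw [hk, zero_mul]
    · rw [hDeval x]
      rw [isUnit_iff_ne_zero, not_not] at hx
      rw [hx, mul_zero]
  exact hf ((mul_eq_zero.1 hfD).resolve_right hD0)
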